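/- Suppose for each v in [v̲, v̄] (with v̲ < v̄), H_v is the CDF of a probability distribution on ℝ with continuous strictly positive density h_v on the interval (V̲, V̄) (and H_v(x) = 0 for x ≤ V̲, H_v(x) = 1 for x ≥ V̄, when these bounds are finite); for each fixed V in (V̲, V̄), the map v ↦ H_v(V) is continuously differentiable with ∂H_v(V)/∂v < 0 for all v in [v̲, v̄]; and there exists an integrable function b : (V̲, V̄) → ℝ≥0 with |∂H_v(V)/∂v| ≤ b(V) for all v and V. If V̲ > −∞, then Assumptions A1 and A2 cannot both hold: it is impossible that (∂H_v(V)/∂v)/h_v(V) is weakly increasing in V over (V̲, V̄) for every v and weakly increasing in v over (v̲, v̄) for every V. -/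

import Mathlib

open MeasureTheory Set

/-- The open interval `(a, b)` of real numbers, where the endpoints `a, b` are extended
reals (so `a = ⊥` means unbounded below and `b = ⊤` means unbounded above). -/
def ERIoo (a b : EReal) : Set ℝ := {x : ℝ | a < (x : EReal) ∧ (x : EReal) < b}

set_option maxHeartbeats 1000000 in
/-- **Proposition 2 (Impossibility of lower bounded support).**
For each `v ∈ [vlo, vhi]`, let `H v` be the CDF of a probability distribution with
continuous strictly positive density `h v` on `(Vlo, Vhi)`, where the lower endpoint
`Vlo` is finite (`Vlo > -∞`); for each fixed `V ∈ (Vlo, Vhi)` the map `v ↦ H v V` is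
continuously differentiable with derivative `Hv v V < 0`, and the partial derivatives are
dominated by an integrable function `b`.  Then Assumptions A1 and A2 cannot both hold:
it is impossible that `(∂H_v(V)/∂v)/h_v(V)` is weakly increasing in `V` over `(Vlo, Vhi)`
for every `v` and weakly increasing in `v` over `(vlo, vhi)` for every `V`. -/
theorem stmt_4
    (vlo vhi : ℝ) (hv : vlo < vhi)
    (Vlo : ℝ) (Vhi : EReal) (hV : (Vlo : EReal) < Vhi)
    (H h Hv : ℝ → ℝ → ℝ)
    -- `h v` is a continuous strictly positive density on `(Vlo, Vhi)`
    (hh_cont : ∀ v ∈ Icc vlo vhi, ContinuousOn (h v) (ERIoo Vlo Vhi))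
    (hh_pos : ∀ v ∈ Icc vlo vhi, ∀ V ∈ ERIoo Vlo Vhi, 0 < h v V)
    (hh_int : ∀ v ∈ Icc vlo vhi, IntegrableOn (h v) (ERIoo Vlo Vhi))
    -- `H v` is the corresponding CDF of a probability distribution
    (hmono : ∀ v ∈ Icc vlo vhi, Monotone (H v))
    (hcdf : ∀ v ∈ Icc vlo vhi, ∀ x ∈ ERIoo Vlo Vhi, H v x = ∫ t in Ioc Vlo x, h v t)
    (hzero : ∀ v ∈ Icc vlo vhi, ∀ x : ℝ, x ≤ Vlo → H v x = 0)
    (hone : ∀ v ∈ Icc vlo vhi, ∀ x : ℝ, Vhi ≤ (x : EReal) → H v x = 1)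
    (hmass : ∀ v ∈ Icc vlo vhi, ∫ t in ERIoo Vlo Vhi, h v t = 1)
    -- `v ↦ H v V` is continuously differentiable, strictly decreasing in `v`
    (hH_deriv : ∀ V ∈ ERIoo Vlo Vhi, ∀ v ∈ Icc vlo vhi,
      HasDerivWithinAt (fun v => H v V) (Hv v V) (Icc vlo vhi) v)
    (hHv_cont : ∀ V ∈ ERIoo Vlo Vhi, ContinuousOn (fun v => Hv v V) (Icc vlo vhi))
    (hHv_neg : ∀ v ∈ Icc vlo vhi, ∀ V ∈ ERIoo Vlo Vhi, Hv v V < 0)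
    -- dominating integrable function
    (b : ℝ → ℝ)
    (hb_nonneg : ∀ V ∈ ERIoo Vlo Vhi, 0 ≤ b V)
    (hb_int : IntegrableOn b (ERIoo Vlo Vhi))
    (hb_dom : ∀ v ∈ Icc vlo vhi, ∀ V ∈ ERIoo Vlo Vhi, |Hv v V| ≤ b V) :
    ¬ ((∀ v ∈ Icc vlo vhi, MonotoneOn (fun V => Hv v V / h v V) (ERIoo Vlo Vhi)) ∧
        (∀ V ∈ ERIoo Vlo Vhi, MonotoneOn (fun v => Hv v V / h v V) (Ioo vlo vhi))) := by
  rintro ⟨A1, A2⟩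
  obtain ⟨V0, hV0lo, hV0hi⟩ := EReal.lt_iff_exists_real_btwn.mp hV
  have hV0lo' : Vlo < V0 := EReal.coe_lt_coe_iff.mp hV0lo
  have hmemER : ∀ t : ℝ, Vlo < t → t ≤ V0 → t ∈ ERIoo Vlo Vhi := fun t h1 h2 =>
    ⟨EReal.coe_lt_coe_iff.mpr h1, lt_of_le_of_lt (EReal.coe_le_coe_iff.mpr h2) hV0hi⟩
  have hV0mem : V0 ∈ ERIoo Vlo Vhi := hmemER V0 hV0lo' le_rfl
  have hIocsub : ∀ y : ℝ, y ≤ V0 → Ioc Vlo y ⊆ ERIoo Vlo Vhi := fun y hy t ht =>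
    hmemER t ht.1 (ht.2.trans hy)
  -- choice of v2
  set v2 : ℝ := (vlo + vhi) / 2 with hv2def
  have hv2o : v2 ∈ Ioo vlo vhi := ⟨by rw [hv2def]; linarith, by rw [hv2def]; linarith⟩
  have hv2I : v2 ∈ Icc vlo vhi := Ioo_subset_Icc_self hv2o
  -- the constant c
  obtain ⟨c, hc, hceq⟩ : ∃ c : ℝ, 0 < c ∧ Hv v2 V0 / h v2 V0 = -c := by
    refine ⟨-(Hv v2 V0 / h v2 V0), ?_, by ring⟩
    have h1 := hHv_neg v2 hv2I V0 hV0mem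
    have h2 := hh_pos v2 hv2I V0 hV0mem
    have := div_neg_of_neg_of_pos h1 h2
    linarith
  -- choice of v1
  set v1 : ℝ := max ((vlo + v2) / 2) (v2 - (V0 - Vlo) / (2 * c)) with hv1def
  have hv1lt : v1 < v2 := by
    apply max_lt
    · rw [hv2def] at *; linarith [hv2o.1]
    · have : 0 < (V0 - Vlo) / (2 * c) := div_pos (by linarith) (by linarith)
      linarith
  have hv1lo : vlo < v1 := lt_of_lt_of_le (by linarith [hv2o.1]) (le_max_left _ _)
  have hIcc12 : Icc v1 v2 ⊆ Icc vlo vhi := Icc_subset_Icc hv1lo.le hv2o.2.le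
  have hIoo12 : Icc v1 v2 ⊆ Ioo vlo vhi := fun x hx =>
    ⟨hv1lo.trans_le hx.1, lt_of_le_of_lt hx.2 hv2o.2⟩
  have hρle : c * (v2 - v1) ≤ (V0 - Vlo) / 2 := by
    have h1 : v2 - v1 ≤ (V0 - Vlo) / (2 * c) := by
      have := le_max_right ((vlo + v2) / 2) (v2 - (V0 - Vlo) / (2 * c))
      rw [hv1def]; linarith
    have h2 : c * ((V0 - Vlo) / (2 * c)) = (V0 - Vlo) / 2 := by
      field_simp
    calc c * (v2 - v1) ≤ c * ((V0 - Vlo) / (2 * c)) :=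
          mul_le_mul_of_nonneg_left h1 hc.le
      _ = (V0 - Vlo) / 2 := h2
  have hρpos : 0 < c * (v2 - v1) := mul_pos hc (by linarith)
  -- the key pointwise inequalities
  have keyP : ∀ u ∈ Icc v1 v2, ∀ t : ℝ, Vlo < t → t ≤ V0 → Hv u t ≤ -c * h u t := by
    intro u hu t ht1 ht2
    have htm := hmemER t ht1 ht2
    have huo : u ∈ Ioo vlo vhi := hIoo12 hu
    have h1 : Hv u t / h u t ≤ Hv v2 t / h v2 t := A2 t htm huo hv2o hu.2
    have h2 : Hv v2 t / h v2 t ≤ Hv v2 V0 / h v2 V0 := A1 v2 hv2I htm hV0mem ht2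
    have hp := hh_pos u (hIcc12 hu) t htm
    rw [hceq] at h2
    exact (div_le_iff₀ hp).mp (h1.trans h2)
  have keyQ : ∀ u ∈ Icc v1 v2, ∀ t : ℝ, Vlo < t → t ≤ V0 → c * h u t ≤ b t := by
    intro u hu t ht1 ht2
    have h1 := keyP u hu t ht1 ht2
    have h2 := hb_dom u (hIcc12 hu) t (hmemER t ht1 ht2)
    have h3 : |Hv u t| = -Hv u t := abs_of_neg (hHv_neg u (hIcc12 hu) t (hmemER t ht1 ht2))
    linarith
  -- measurability and integrability facts
  have hERmeas : MeasurableSet (ERIoo Vlo Vhi) := measurable_coe_real_ereal measurableSet_Ioo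
  have hHmeas : ∀ u ∈ Icc vlo vhi, Measurable (H u) := fun u hu => (hmono u hu).measurable
  have hint_h : ∀ u ∈ Icc vlo vhi, ∀ y : ℝ, y ≤ V0 → IntegrableOn (h u) (Ioc Vlo y) :=
    fun u hu y hy => (hh_int u hu).mono_set (hIocsub y hy)
  have hint_b : ∀ y : ℝ, y ≤ V0 → IntegrableOn b (Ioc Vlo y) :=
    fun y hy => hb_int.mono_set (hIocsub y hy)
  have hH_eq : ∀ u ∈ Icc vlo vhi, ∀ y : ℝ, Vlo < y → y ≤ V0 →
      H u y = ∫ t in Ioc Vlo y, h u t :=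
    fun u hu y h1 h2 => hcdf u hu y (hmemER y h1 h2)
  have hHpos : ∀ u ∈ Icc vlo vhi, ∀ y : ℝ, Vlo < y → y ≤ V0 → 0 < H u y := by
    intro u hu y h1 h2
    rw [hH_eq u hu y h1 h2, ← intervalIntegral.integral_of_le h1.le]
    refine intervalIntegral.intervalIntegral_pos_of_pos_on ?_ ?_ h1
    · exact (intervalIntegrable_iff_integrableOn_Ioc_of_le h1.le).mpr (hint_h u hu y h2)
    · exact fun x hx => hh_pos u hu x (hmemER x hx.1 (hx.2.le.trans h2))
  have hHnn : ∀ u ∈ Icc vlo vhi, ∀ t : ℝ, 0 ≤ H u t := by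
    intro u hu t
    rcases le_or_gt t Vlo with h1 | h1
    · rw [hzero u hu t h1]
    · rcases lt_or_ge (t : EReal) Vhi with h2 | h2
      · rw [hcdf u hu t ⟨EReal.coe_lt_coe_iff.mpr h1, h2⟩]
        refine setIntegral_nonneg measurableSet_Ioc fun x hx => ?_
        exact (hh_pos u hu x ⟨EReal.coe_lt_coe_iff.mpr hx.1,
          lt_of_le_of_lt (EReal.coe_le_coe_iff.mpr hx.2) h2⟩).le
      · rw [hone u hu t h2]; norm_num
  have hHle1 : ∀ u ∈ Icc vlo vhi, ∀ y : ℝ, Vlo < y → y ≤ V0 → H u y ≤ 1 := by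
    intro u hu y h1 h2
    rw [hH_eq u hu y h1 h2, ← hmass u hu]
    refine setIntegral_mono_set (hh_int u hu) ?_ ?_
    · exact (ae_restrict_iff' hERmeas).mpr (ae_of_all _ fun x hx => (hh_pos u hu x hx).le)
    · exact (hIocsub y h2).eventuallyLE
  have hint_H : ∀ u ∈ Icc vlo vhi, ∀ y : ℝ, IntegrableOn (H u) (Ioc Vlo y) := by
    intro u hu y
    have hcst : IntegrableOn (fun _ : ℝ => H u y) (Ioc Vlo y) volume :=
      integrableOn_const measure_Ioc_lt_top.ne
    refine Integrable.mono' hcst ((hHmeas u hu).aestronglyMeasurable.restrict) ?_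
    refine (ae_restrict_iff' measurableSet_Ioc).mpr (ae_of_all _ fun t ht => ?_)
    rw [Real.norm_eq_abs, abs_of_nonneg (hHnn u hu t)]
    exact hmono u hu ht.2
  -- H is antitone in v
  have hHanti : ∀ y : ℝ, Vlo < y → y ≤ V0 → ∀ u ∈ Icc vlo vhi, ∀ u' ∈ Icc vlo vhi,
      u ≤ u' → H u' y ≤ H u y := by
    intro y h1 h2 u hu u' hu' hle
    rcases eq_or_lt_of_le hle with rfl | hlt
    · exact le_rfl
    · have hym := hmemER y h1 h2
      have hcont : ContinuousOn (fun z => H z y) (Icc u u') := fun x hx =>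
        ((hH_deriv y hym x (Icc_subset_Icc hu.1 hu'.2 hx)).continuousWithinAt).mono
          (Icc_subset_Icc hu.1 hu'.2)
      have hdiff : ∀ x ∈ Ioo u u', HasDerivAt (fun z => H z y) (Hv x y) x := by
        intro x hx
        have hxI : x ∈ Icc vlo vhi := ⟨hu.1.trans hx.1.le, hx.2.le.trans hu'.2⟩
        have hxo1 : vlo < x := lt_of_le_of_lt hu.1 hx.1
        have hxo2 : x < vhi := lt_of_lt_of_le hx.2 hu'.2
        exact (hH_deriv y hym x hxI).hasDerivAt (Icc_mem_nhds hxo1 hxo2)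
      obtain ⟨ξ, hξ, hslope⟩ :=
        exists_hasDerivAt_eq_slope (fun z => H z y) (fun z => Hv z y) hlt hcont hdiff
      have hξI : ξ ∈ Icc vlo vhi := ⟨hu.1.trans hξ.1.le, hξ.2.le.trans hu'.2⟩
      have hneg : Hv ξ y < 0 := hHv_neg ξ hξI y hym
      rw [hslope] at hneg
      rcases div_neg_iff.mp hneg with ⟨_, hb'⟩ | ⟨ha', _⟩
      · linarith
      · linarith
  -- a.e. strong measurability of Hv u on Ioc Vlo y
  have hHv_measR : ∀ u ∈ Icc v1 v2, ∀ y : ℝ, y ≤ V0 →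
      AEStronglyMeasurable (fun t => Hv u t) (volume.restrict (Ioc Vlo y)) := by
    intro u hu y hy
    have huo : u ∈ Ioo vlo vhi := hIoo12 hu
    set δ : ℕ → ℝ := fun n => min (1 / ((n : ℝ) + 1)) ((vhi - u) / 2) with hδdef
    have hδpos : ∀ n, 0 < δ n := fun n => lt_min (by positivity) (by linarith [huo.2])
    have hδmem : ∀ n, u + δ n ∈ Icc vlo vhi := by
      intro n
      constructor
      · linarith [huo.1, hδpos n]
      · have := min_le_right (1 / ((n : ℝ) + 1)) ((vhi - u) / 2)
        have h2 : δ n ≤ (vhi - u) / 2 := this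
        linarith [huo.2]
    have hδ0 : Filter.Tendsto δ Filter.atTop (nhds 0) := by
      refine squeeze_zero (fun n => (hδpos n).le) (fun n => min_le_left _ _) ?_
      exact tendsto_one_div_add_atTop_nhds_zero_nat
    have htend : Filter.Tendsto (fun n => u + δ n) Filter.atTop (nhdsWithin u {u}ᶜ) := by
      refine tendsto_nhdsWithin_of_tendsto_nhds_of_eventually_within _ ?_ ?_
      · simpa using tendsto_const_nhds.add hδ0
      · exact Filter.Eventually.of_forall fun n =>
          (lt_add_of_pos_right u (hδpos n)).ne'
    refine aestronglyMeasurable_of_tendsto_ae Filter.atTop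
      (f := fun n => fun t => (H (u + δ n) t - H u t) / δ n) (fun n => ?_) ?_
    · exact (((hHmeas _ (hδmem n)).sub (hHmeas u (hIcc12 hu))).div_const _)
        |>.aestronglyMeasurable.restrict
    · refine (ae_restrict_iff' measurableSet_Ioc).mpr (ae_of_all _ fun t ht => ?_)
      have htm := hmemER t ht.1 (ht.2.trans hy)
      have hder : HasDerivAt (fun z => H z t) (Hv u t) u :=
        (hH_deriv t htm u (hIcc12 hu)).hasDerivAt (Icc_mem_nhds huo.1 huo.2)
      have h1 := (hasDerivAt_iff_tendsto_slope.mp hder).comp htend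
      refine h1.congr fun n => ?_
      show slope (fun z => H z t) u (u + δ n) = _
      rw [slope_def_field]
      congr 1
      ring
  have hint_Hv : ∀ u ∈ Icc v1 v2, ∀ y : ℝ, y ≤ V0 →
      IntegrableOn (fun t => Hv u t) (Ioc Vlo y) := by
    intro u hu y hy
    refine Integrable.mono' (hint_b y hy) (hHv_measR u hu y hy) ?_
    refine (ae_restrict_iff' measurableSet_Ioc).mpr (ae_of_all _ fun t ht => ?_)
    rw [Real.norm_eq_abs]
    exact hb_dom u (hIcc12 hu) t (hmemER t ht.1 (ht.2.trans hy))
  -- derivative of the parametric integral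
  have hw_deriv : ∀ y : ℝ, Vlo < y → y ≤ V0 → ∀ u ∈ Icc v1 v2,
      HasDerivAt (fun z => ∫ t in Ioc Vlo y, H z t) (∫ t in Ioc Vlo y, Hv u t) u := by
    intro y hy1 hy2 u hu
    have huo : u ∈ Ioo vlo vhi := hIoo12 hu
    have hε : 0 < min (u - vlo) (vhi - u) := lt_min (by linarith [huo.1]) (by linarith [huo.2])
    have hball : Metric.ball u (min (u - vlo) (vhi - u)) ⊆ Ioo vlo vhi := by
      intro x hx
      rw [Metric.mem_ball, Real.dist_eq] at hx
      have h1 := abs_lt.mp hx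
      constructor
      · have := min_le_left (u - vlo) (vhi - u); linarith [h1.1]
      · have := min_le_right (u - vlo) (vhi - u); linarith [h1.2]
    have key := hasDerivAt_integral_of_dominated_loc_of_deriv_le
      (μ := volume.restrict (Ioc Vlo y)) (F := fun z t => H z t) (F' := fun z t => Hv z t)
      (x₀ := u) (bound := b) (Metric.ball_mem_nhds u hε)
      ?_ ?_ ?_ ?_ ?_ ?_
    · exact key.2
    · refine Filter.eventually_of_mem (Ioo_mem_nhds huo.1 huo.2) fun x hx => ?_
      exact (hHmeas x (Ioo_subset_Icc_self hx)).aestronglyMeasurable.restrict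
    · exact hint_H u (hIcc12 hu) y
    · exact hHv_measR u hu y hy2
    · refine (ae_restrict_iff' measurableSet_Ioc).mpr (ae_of_all _ fun t ht => ?_)
      intro x hx
      rw [Real.norm_eq_abs]
      exact hb_dom x (Ioo_subset_Icc_self (hball hx)) t (hmemER t ht.1 (ht.2.trans hy2))
    · exact hint_b y hy2
    · refine (ae_restrict_iff' measurableSet_Ioc).mpr (ae_of_all _ fun t ht => ?_)
      intro x hx
      have htm := hmemER t ht.1 (ht.2.trans hy2)
      have hxo := hball hx
      exact (hH_deriv t htm x (Ioo_subset_Icc_self hxo)).hasDerivAt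
        (Icc_mem_nhds hxo.1 hxo.2)
  -- merging integrals of b over adjacent intervals
  have bmerge : ∀ A B C : ℝ, Vlo < A → A ≤ B → B ≤ C → C ≤ V0 →
      (∫ t in Ioc A B, b t) + (∫ t in Ioc B C, b t) = ∫ t in Ioc A C, b t := by
    intro A B C h1 h2 h3 h4
    rw [← Set.Ioc_union_Ioc_eq_Ioc h2 h3]
    rw [setIntegral_union (Set.Ioc_disjoint_Ioc_of_le le_rfl) measurableSet_Ioc
      ((hint_b C h4).mono_set (Ioc_subset_Ioc h1.le h3))
      ((hint_b C h4).mono_set (Ioc_subset_Ioc (h1.le.trans h2) le_rfl))]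
  -- the one-step inequality
  have step : ∀ W : ℝ, Vlo < W → W + c * (v2 - v1) ≤ V0 →
      ∀ v ∈ Icc v1 v2, ∀ v' ∈ Icc v1 v2, v ≤ v' →
      (∫ t in Ioc Vlo (W + c * (v' - v1)), H v' t)
        ≤ (∫ t in Ioc Vlo (W + c * (v - v1)), H v t)
          + (v' - v) * ∫ t in Ioc (W + c * (v - v1)) (W + c * (v' - v1)), b t := by
    intro W hW hWV v hvm v' hv'm hle
    rcases eq_or_lt_of_le hle with rfl | hlt
    · simp
    set y : ℝ := W + c * (v - v1) with hydef
    set y' : ℝ := W + c * (v' - v1) with hy'def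
    have hyy' : y ≤ y' := by rw [hydef, hy'def]; nlinarith [hc]
    have hVloy : Vlo < y := by rw [hydef]; nlinarith [hc, hvm.1]
    have hy'V0 : y' ≤ V0 := by
      rw [hy'def]
      have h1 : c * (v' - v1) ≤ c * (v2 - v1) := by nlinarith [hc, hv'm.2]
      linarith
    have hyV0 : y ≤ V0 := hyy'.trans hy'V0
    have hv'I : v' ∈ Icc vlo vhi := hIcc12 hv'm
    have hsplit : (∫ t in Ioc Vlo y', H v' t)
        = (∫ t in Ioc Vlo y, H v' t) + ∫ t in Ioc y y', H v' t := by
      rw [← setIntegral_union (Set.Ioc_disjoint_Ioc_of_le le_rfl) measurableSet_Ioc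
        ((hint_H v' hv'I y').mono_set (Ioc_subset_Ioc le_rfl hyy'))
        ((hint_H v' hv'I y').mono_set (Ioc_subset_Ioc hVloy.le le_rfl)),
        Set.Ioc_union_Ioc_eq_Ioc hVloy.le hyy']
    obtain ⟨ξ, hξmem, hξeq⟩ := exists_hasDerivAt_eq_slope
      (fun z => ∫ t in Ioc Vlo y, H z t) (fun z => ∫ t in Ioc Vlo y, Hv z t) hlt
      (fun x hx => ((hw_deriv y hVloy hyV0 x
        (⟨hvm.1.trans hx.1, hx.2.trans hv'm.2⟩)).continuousAt).continuousWithinAt)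
      (fun x hx => hw_deriv y hVloy hyV0 x ⟨hvm.1.trans hx.1.le, hx.2.le.trans hv'm.2⟩)
    have hξ12 : ξ ∈ Icc v1 v2 := ⟨hvm.1.trans hξmem.1.le, hξmem.2.le.trans hv'm.2⟩
    have hd1 : (∫ t in Ioc Vlo y, Hv ξ t) ≤ -c * H ξ y := by
      have hmono_int : (∫ t in Ioc Vlo y, Hv ξ t) ≤ ∫ t in Ioc Vlo y, -c * h ξ t := by
        refine setIntegral_mono_on (hint_Hv ξ hξ12 y hyV0)
          ((hint_h ξ (hIcc12 hξ12) y hyV0).const_mul _) measurableSet_Ioc ?_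
        exact fun t ht => keyP ξ hξ12 t ht.1 (ht.2.trans hyV0)
      have h2 : (∫ t in Ioc Vlo y, -c * h ξ t) = -c * ∫ t in Ioc Vlo y, h ξ t :=
        integral_const_mul _ _
      rw [h2, ← hH_eq ξ (hIcc12 hξ12) y hVloy hyV0] at hmono_int
      exact hmono_int
    have hwdiff : (∫ t in Ioc Vlo y, H v' t) - (∫ t in Ioc Vlo y, H v t)
        = (v' - v) * ∫ t in Ioc Vlo y, Hv ξ t := by
      rw [hξeq]
      field_simp [sub_ne_zero.mpr hlt.ne']
    have hT1 : (∫ t in Ioc Vlo y, H v' t)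
        ≤ (∫ t in Ioc Vlo y, H v t) + (v' - v) * (-c * H v' y) := by
      have hH' : H v' y ≤ H ξ y :=
        hHanti y hVloy hyV0 ξ (hIcc12 hξ12) v' hv'I hξmem.2.le
      have h3 : (v' - v) * (∫ t in Ioc Vlo y, Hv ξ t) ≤ (v' - v) * (-c * H ξ y) :=
        mul_le_mul_of_nonneg_left hd1 (by linarith)
      have h4 : (v' - v) * (-c * H ξ y) ≤ (v' - v) * (-c * H v' y) := by nlinarith
      linarith [hwdiff, h3, h4]
    have hT2 : (∫ t in Ioc y y', H v' t) ≤ (y' - y) * H v' y' := by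
      have hint1 : IntegrableOn (H v') (Ioc y y') :=
        (hint_H v' hv'I y').mono_set (Ioc_subset_Ioc hVloy.le le_rfl)
      have hint2 : IntegrableOn (fun _ : ℝ => H v' y') (Ioc y y') volume :=
        integrableOn_const measure_Ioc_lt_top.ne
      have h5 := setIntegral_mono_on hint1 hint2 measurableSet_Ioc
        (fun t ht => hmono v' hv'I ht.2)
      rwa [setIntegral_const, Real.volume_real_Ioc_of_le (by linarith),
        smul_eq_mul] at h5
    have hHdiff : H v' y' - H v' y = ∫ t in Ioc y y', h v' t := by
      rw [hH_eq v' hv'I y' (hVloy.trans_le hyy') hy'V0, hH_eq v' hv'I y hVloy hyV0,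
        ← Set.Ioc_union_Ioc_eq_Ioc hVloy.le hyy',
        setIntegral_union (Set.Ioc_disjoint_Ioc_of_le le_rfl) measurableSet_Ioc
          ((hint_h v' hv'I y' hy'V0).mono_set (Ioc_subset_Ioc le_rfl hyy'))
          ((hint_h v' hv'I y' hy'V0).mono_set (Ioc_subset_Ioc hVloy.le le_rfl))]
      ring
    have hhb : c * ∫ t in Ioc y y', h v' t ≤ ∫ t in Ioc y y', b t := by
      rw [← integral_const_mul]
      refine setIntegral_mono_on
        (((hint_h v' hv'I y' hy'V0).mono_set (Ioc_subset_Ioc hVloy.le le_rfl)).const_mul _)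
        ((hint_b y' hy'V0).mono_set (Ioc_subset_Ioc hVloy.le le_rfl)) measurableSet_Ioc ?_
      exact fun t ht => keyQ v' hv'm t (hVloy.trans ht.1) (ht.2.trans hy'V0)
    have hyy'eq : y' - y = c * (v' - v) := by rw [hydef, hy'def]; ring
    calc ∫ t in Ioc Vlo y', H v' t
        = (∫ t in Ioc Vlo y, H v' t) + ∫ t in Ioc y y', H v' t := hsplit
      _ ≤ ((∫ t in Ioc Vlo y, H v t) + (v' - v) * (-c * H v' y)) + (y' - y) * H v' y' :=
          add_le_add hT1 hT2
      _ = (∫ t in Ioc Vlo y, H v t) + (v' - v) * (c * (H v' y' - H v' y)) := by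
          rw [hyy'eq]; ring
      _ = (∫ t in Ioc Vlo y, H v t) + (v' - v) * (c * ∫ t in Ioc y y', h v' t) := by
          rw [hHdiff]
      _ ≤ (∫ t in Ioc Vlo y, H v t) + (v' - v) * ∫ t in Ioc y y', b t :=
          add_le_add le_rfl (mul_le_mul_of_nonneg_left hhb (by linarith))
  -- the bridge: the value of Ψ at v2 is at most its value at v1
  have bridge : ∀ W : ℝ, Vlo < W → W + c * (v2 - v1) ≤ V0 →
      (∫ t in Ioc Vlo (W + c * (v2 - v1)), H v2 t) ≤ ∫ t in Ioc Vlo W, H v1 t := by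
    intro W hW hWV
    set B : ℝ := ∫ t in Ioc W (W + c * (v2 - v1)), b t with hBdef
    have hBnn : 0 ≤ B := setIntegral_nonneg measurableSet_Ioc fun t ht =>
      hb_nonneg t (hmemER t (hW.trans ht.1) (ht.2.trans hWV))
    have main : ∀ n : ℕ, 0 < n →
        (∫ t in Ioc Vlo (W + c * (v2 - v1)), H v2 t)
          ≤ (∫ t in Ioc Vlo W, H v1 t) + ((v2 - v1) * B) / n := by
      intro n hn
      have hnR : (0:ℝ) < n := by exact_mod_cast hn
      set d : ℝ := (v2 - v1) / n with hddef
      have hdpos : 0 < d := div_pos (by linarith) hnR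
      have hnd : (n:ℝ) * d = v2 - v1 := by rw [hddef]; field_simp
      have humem : ∀ k : ℕ, k ≤ n → v1 + k * d ∈ Icc v1 v2 := by
        intro k hk
        have hkR : (k : ℝ) ≤ n := by exact_mod_cast hk
        have hkd0 : 0 ≤ (k:ℝ) * d := mul_nonneg (Nat.cast_nonneg k) hdpos.le
        have hknd : (k:ℝ) * d ≤ (n:ℝ) * d := mul_le_mul_of_nonneg_right hkR hdpos.le
        constructor
        · linarith
        · linarith [hnd]
      have tele : ∀ k : ℕ, k ≤ n →
          (∫ t in Ioc Vlo (W + c * ((v1 + k * d) - v1)), H (v1 + k * d) t)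
            ≤ (∫ t in Ioc Vlo W, H v1 t)
              + d * ∫ t in Ioc W (W + c * ((v1 + k * d) - v1)), b t := by
        intro k
        induction k with
        | zero => intro _; simp
        | succ k ih =>
          intro hk1
          have hk : k ≤ n := Nat.le_of_succ_le hk1
          have hkR : (k : ℝ) ≤ n := by exact_mod_cast hk
          have hk1R : ((k:ℝ) + 1) ≤ n := by exact_mod_cast hk1
          have ihk := ih hk
          have hmem1 := humem k hk
          have hmem2' := humem (k+1) hk1
          have hcast : ((k+1 : ℕ) : ℝ) = (k : ℝ) + 1 := by push_cast; ring
          rw [hcast] at hmem2'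
          have hkd0 : 0 ≤ (k:ℝ) * d := mul_nonneg (Nat.cast_nonneg k) hdpos.le
          have hstep' : (k:ℝ) * d ≤ ((k:ℝ)+1) * d :=
            mul_le_mul_of_nonneg_right (by linarith) hdpos.le
          have heq1 : (v1 + (k:ℝ)*d) - v1 = (k:ℝ)*d := by ring
          have heq2 : (v1 + ((k:ℝ)+1)*d) - v1 = ((k:ℝ)+1)*d := by ring
          have hA0 : 0 ≤ c * ((v1 + (k:ℝ)*d) - v1) := by
            rw [heq1]; exact mul_nonneg hc.le hkd0
          have hAB : c * ((v1 + (k:ℝ)*d) - v1) ≤ c * ((v1 + ((k:ℝ)+1)*d) - v1) :=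
            mul_le_mul_of_nonneg_left (by linarith) hc.le
          have hC : c * ((v1 + ((k:ℝ)+1)*d) - v1) ≤ c * (v2 - v1) :=
            mul_le_mul_of_nonneg_left (by linarith [hmem2'.2]) hc.le
          have hs := step W hW hWV (v1 + k*d) hmem1 (v1 + ((k:ℝ)+1)*d) hmem2'
            (by linarith)
          have hmerge : (∫ t in Ioc W (W + c * ((v1 + (k:ℝ) * d) - v1)), b t)
              + (∫ t in Ioc (W + c * ((v1 + (k:ℝ) * d) - v1))
                  (W + c * ((v1 + ((k:ℝ)+1) * d) - v1)), b t)
              = ∫ t in Ioc W (W + c * ((v1 + ((k:ℝ)+1) * d) - v1)), b t := by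
            refine bmerge _ _ _ hW (by linarith) (by linarith) (by linarith)
          have hdd : (v1 + ((k:ℝ)+1)*d) - (v1 + (k:ℝ)*d) = d := by ring
          rw [hdd] at hs
          have hbnn2 : 0 ≤ ∫ t in Ioc (W + c * ((v1 + (k:ℝ) * d) - v1))
              (W + c * ((v1 + ((k:ℝ)+1) * d) - v1)), b t := by
            refine setIntegral_nonneg measurableSet_Ioc fun t ht => hb_nonneg t ?_
            exact hmemER t (by linarith [ht.1]) (by linarith [ht.2])
          have hgoal : (∫ t in Ioc Vlo (W + c * ((v1 + ((k:ℝ)+1) * d) - v1)),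
              H (v1 + ((k:ℝ)+1) * d) t)
              ≤ (∫ t in Ioc Vlo W, H v1 t)
                + d * ∫ t in Ioc W (W + c * ((v1 + ((k:ℝ)+1) * d) - v1)), b t := by
            rw [← hmerge]
            calc (∫ t in Ioc Vlo (W + c * ((v1 + ((k:ℝ)+1) * d) - v1)),
                H (v1 + ((k:ℝ)+1) * d) t)
                ≤ (∫ t in Ioc Vlo (W + c * ((v1 + (k:ℝ) * d) - v1)), H (v1 + (k:ℝ)*d) t)
                  + d * ∫ t in Ioc (W + c * ((v1 + (k:ℝ) * d) - v1))
                      (W + c * ((v1 + ((k:ℝ)+1) * d) - v1)), b t := hs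
              _ ≤ ((∫ t in Ioc Vlo W, H v1 t)
                    + d * ∫ t in Ioc W (W + c * ((v1 + (k:ℝ) * d) - v1)), b t)
                  + d * ∫ t in Ioc (W + c * ((v1 + (k:ℝ) * d) - v1))
                      (W + c * ((v1 + ((k:ℝ)+1) * d) - v1)), b t := by linarith [ihk]
              _ = (∫ t in Ioc Vlo W, H v1 t)
                  + d * ((∫ t in Ioc W (W + c * ((v1 + (k:ℝ) * d) - v1)), b t)
                    + ∫ t in Ioc (W + c * ((v1 + (k:ℝ) * d) - v1))
                      (W + c * ((v1 + ((k:ℝ)+1) * d) - v1)), b t) := by ring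
          rw [hcast]
          exact hgoal
      have hfin := tele n le_rfl
      have hun : v1 + (n:ℝ) * d = v2 := by linarith [hnd]
      rw [hun] at hfin
      have hBd : d * (∫ t in Ioc W (W + c * (v2 - v1)), b t) = ((v2 - v1) * B) / n := by
        rw [hBdef, hddef]; ring
      rw [← hBd]
      exact hfin
    have hlim : Filter.Tendsto
        (fun n : ℕ => (∫ t in Ioc Vlo W, H v1 t) + ((v2 - v1) * B) / n)
        Filter.atTop (nhds ((∫ t in Ioc Vlo W, H v1 t) + 0)) :=
      tendsto_const_nhds.add (tendsto_const_div_atTop_nhds_zero_nat _)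
    rw [add_zero] at hlim
    exact ge_of_tendsto hlim (Filter.eventually_atTop.mpr ⟨1, fun n hn => main n hn⟩)
  -- final contradiction
  set ρ : ℝ := c * (v2 - v1) with hρdef
  have hv1I : v1 ∈ Icc vlo vhi := ⟨hv1lo.le, (hv1lt.trans hv2o.2).le⟩
  have hmid : Vlo < Vlo + ρ/2 := by linarith [hρpos]
  have hmidV0 : Vlo + ρ/2 ≤ V0 := by linarith [hρle]
  have hμpos : 0 < H v2 (Vlo + ρ/2) := hHpos v2 hv2I _ hmid hmidV0
  set ε0 : ℝ := min ((ρ/2) * H v2 (Vlo + ρ/2)) (V0 - Vlo - ρ) with hε0def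
  have hε0pos : 0 < ε0 :=
    lt_min (mul_pos (by linarith [hρpos]) hμpos) (by linarith [hρle, hV0lo'])
  set W : ℝ := Vlo + ε0/2 with hWdef
  have hW1 : Vlo < W := by rw [hWdef]; linarith
  have hW2 : W + ρ ≤ V0 := by
    have := min_le_right ((ρ/2) * H v2 (Vlo + ρ/2)) (V0 - Vlo - ρ)
    rw [hWdef]; rw [hε0def] at *; linarith [this]
  have hWV0 : W ≤ V0 := by linarith [hρpos]
  have hbr := bridge W hW1 hW2
  have hup : (∫ t in Ioc Vlo W, H v1 t) ≤ W - Vlo := by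
    have h1 : IntegrableOn (H v1) (Ioc Vlo W) := hint_H v1 hv1I W
    have h2 : IntegrableOn (fun _ : ℝ => (1:ℝ)) (Ioc Vlo W) volume :=
      integrableOn_const measure_Ioc_lt_top.ne
    have h3 := setIntegral_mono_on h1 h2 measurableSet_Ioc
      (fun t ht => hHle1 v1 hv1I t ht.1 (ht.2.trans hWV0))
    rwa [setIntegral_const, Real.volume_real_Ioc_of_le (by linarith),
      smul_eq_mul, mul_one] at h3
  have hlow1 : (ρ/2) * H v2 (Vlo + ρ/2) ≤ ∫ t in Ioc (W + ρ/2) (W + ρ), H v2 t := by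
    have hint1 : IntegrableOn (H v2) (Ioc (W + ρ/2) (W + ρ)) :=
      (hint_H v2 hv2I (W + ρ)).mono_set (Ioc_subset_Ioc (by linarith) le_rfl)
    have hint2 : IntegrableOn (fun _ : ℝ => H v2 (Vlo + ρ/2)) (Ioc (W + ρ/2) (W + ρ))
        volume := integrableOn_const measure_Ioc_lt_top.ne
    have h4 := setIntegral_mono_on hint2 hint1 measurableSet_Ioc
      (fun t ht => hmono v2 hv2I (by linarith [ht.1] : Vlo + ρ/2 ≤ t))
    rwa [setIntegral_const, Real.volume_real_Ioc_of_le (by linarith [hρpos]), smul_eq_mul,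
      (by ring : W + ρ - (W + ρ/2) = ρ/2)] at h4
  have hlow2 : (∫ t in Ioc (W + ρ/2) (W + ρ), H v2 t) ≤ ∫ t in Ioc Vlo (W + ρ), H v2 t := by
    refine setIntegral_mono_set (hint_H v2 hv2I (W + ρ)) ?_ ?_
    · exact (ae_restrict_iff' measurableSet_Ioc).mpr (ae_of_all _ fun t _ => hHnn v2 hv2I t)
    · exact (Ioc_subset_Ioc (by linarith : Vlo ≤ W + ρ/2) le_rfl).eventuallyLE
  have hmin1 : ε0 ≤ (ρ/2) * H v2 (Vlo + ρ/2) := min_le_left _ _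
  have hWlo : W - Vlo = ε0 / 2 := by rw [hWdef]; ring
  have hchain : ε0 ≤ W - Vlo := le_trans hmin1 (le_trans hlow1 (le_trans hlow2
    (le_trans hbr hup)))
  rw [hWlo] at hchain
  linarith
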